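/- arXiv:0912.2088 — 3 statements merged into one kernel-verified Lean document; each statement's English description precedes it below -/
import Mathlib

section
/- Left cancellation condition (LF3) for E-weak equivalences: if f, g : A → B are parallel morphisms in T and s : A' → A is an E-weak equivalence with f ∘ s = g ∘ s, then there exists an E-weak equivalence t : B → B' with t ∘ f = t ∘ g. -/
open CategoryTheory Category Limits Pretriangulated Triangulated

namespace CategoryTheory.Triangulated

/-- The former Mathlib structure `Triangulated.Subcategory` (removed upstream), with its
old meaning. -/
structure Subcategory (C : Type*) [Category C] [HasZeroObject C] [HasShift C ℤ]
    [Preadditive C] [∀ n : ℤ, (shiftFunctor C n).Additive] [Pretriangulated C] where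
  P : C → Prop
  zero' : ∃ (Z : C) (_ : IsZero Z), P Z
  shift (X : C) (n : ℤ) : P X → P (X⟦n⟧)
  ext₂' (T : Triangle C) (_ : T ∈ distTriang C) : P T.obj₁ → P T.obj₃ →
    ObjectProperty.isoClosure P T.obj₂

/-- The former `Triangulated.Subcategory.W`: morphisms whose cone satisfies `S.P`. -/
def Subcategory.W {C : Type*} [Category C] [HasZeroObject C] [HasShift C ℤ]
    [Preadditive C] [∀ n : ℤ, (shiftFunctor C n).Additive] [Pretriangulated C]
    (S : Subcategory C) : MorphismProperty C :=
  fun X Y f => ∃ (Z : C) (g : Y ⟶ Z) (h : Z ⟶ X⟦(1 : ℤ)⟧)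
    (_ : Triangle.mk f g h ∈ distTriang C), S.P Z

end CategoryTheory.Triangulated

/-- **Left cancellation condition (LF3) for `E`-weak equivalences.**
If `f, g : A ⟶ B` are parallel morphisms in a triangulated category `T` and
`s : A' ⟶ A` is an `E`-weak equivalence with `f ∘ s = g ∘ s`, then there is an
`E`-weak equivalence `t : B ⟶ B'` with `t ∘ f = t ∘ g`. -/
theorem left_cancellation {T : Type*} [Category T] [HasZeroObject T] [Preadditive T]
    [HasShift T ℤ] [∀ n : ℤ, (shiftFunctor T n).Additive] [Pretriangulated T]
    [IsTriangulated T] (E : Triangulated.Subcategory T) [ObjectProperty.IsClosedUnderIsomorphisms E.P]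
    (hthick : ∀ ⦃X Y : T⦄ (i : X ⟶ Y) (r : Y ⟶ X), i ≫ r = 𝟙 X → E.P Y → E.P X)
    {A A' B : T} (f g : A ⟶ B) (s : A' ⟶ A) (hs : E.W s) (hfg : s ≫ f = s ≫ g) :
    ∃ (B' : T) (t : B ⟶ B'), E.W t ∧ f ≫ t = g ≫ t := by
  obtain ⟨Z, q, w, hT, hZ⟩ := hs
  have h0 : s ≫ (f - g) = 0 := by
    rw [Preadditive.comp_sub, hfg, sub_self]
  obtain ⟨u, hu⟩ := Triangle.yoneda_exact₂ _ hT (f - g) h0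
  obtain ⟨B', t, d, hT'⟩ := distinguished_cocone_triangle u
  refine ⟨B', t, ⟨Z⟦(1 : ℤ)⟧, d, -u⟦(1 : ℤ)⟧', ?_, E.shift _ _ hZ⟩, ?_⟩
  · exact rot_of_distTriang _ hT'
  · have : (f - g) ≫ t = 0 := by
      have := comp_distTriang_mor_zero₁₂ _ hT'
      have h3 : u ≫ t = 0 := this
      rw [hu]
      exact (Category.assoc _ _ _).trans ((congrArg _ h3).trans comp_zero)
    rw [Preadditive.sub_comp, sub_eq_zero] at this
    exact this
end

section
/- For a homological functor F : T ⥤ Ab admitting a pointwise left Kan extension RF along the localization functor L : T ⥤ T/W, with unit η : F ⟶ L ⋙ RF, the natural transformation η is an isomorphism if and only if F(E) is a zero object for every object E of E. -/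
open CategoryTheory Category Limits Pretriangulated Triangulated

section Aux

variable {C D H : Type*} [Category C] [Category D] [Category H]

/-- If `L` is a localization functor for `W` and `α : F ⟶ L ⋙ G` is an isomorphism,
then `G` is a left Kan extension of `F` along `L` with unit `α`. This is because
whiskering with `L` is a fully faithful functor on functor categories. -/
lemma isLeftKanExtension_of_iso_unit (L : C ⥤ D) (W : MorphismProperty C)
    [L.IsLocalization W] {F : C ⥤ H} (G : D ⥤ H) (α : F ⟶ L ⋙ G) [IsIso α] :
    G.IsLeftKanExtension α := by
  have h1 := Localization.full_whiskeringLeft L W H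
  have h2 := Localization.faithful_whiskeringLeft L W H
  set Φ := (Functor.whiskeringLeft C D H).obj L with hΦ
  constructor
  refine ⟨IsInitial.ofUniqueHom
    (fun Y => StructuredArrow.homMk (Φ.preimage (@inv _ _ _ _ α ‹IsIso α› ≫ Y.hom)) ?_)
    (fun Y m => ?_)⟩
  · change α ≫ Φ.map (Φ.preimage (inv α ≫ Y.hom)) = Y.hom
    rw [Φ.map_preimage, IsIso.hom_inv_id_assoc]
  · have hw : α ≫ Φ.map m.right = Y.hom := StructuredArrow.w m
    ext : 1
    apply Φ.map_injective
    simp only [StructuredArrow.homMk_right]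
    rw [Φ.map_preimage, ← hw]
    exact (IsIso.inv_hom_id_assoc α _).symm

end Aux

/-- For a homological functor `F : T ⥤ Ab` admitting a pointwise left Kan
extension `RF` along the localization functor `L = E.W.Q : T ⥤ T/W`, with unit
`η : F ⟶ L ⋙ RF`, the natural transformation `η` is an isomorphism if and only
if `F(X)` is a zero object for every object `X` of the thick subcategory `E`. -/
theorem unit_isIso_iff_vanishes_on_subcategory {T : Type*} [Category T]
    [HasZeroObject T] [Preadditive T] [HasShift T ℤ]
    [∀ n : ℤ, (shiftFunctor T n).Additive] [Pretriangulated T] [IsTriangulated T]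
    (E : Triangulated.Subcategory T) [ObjectProperty.IsClosedUnderIsomorphisms E.P]
    (hthick : ∀ ⦃X Y : T⦄ (i : X ⟶ Y) (r : Y ⟶ X), i ≫ r = 𝟙 X → E.P Y → E.P X)
    (F : T ⥤ Ab) [F.IsHomological]
    [(E.W.Q).HasPointwiseLeftKanExtension F] :
    IsIso ((E.W.Q).pointwiseLeftKanExtensionUnit F) ↔
      (∀ X : T, E.P X → IsZero (F.obj X)) := by
  open ZeroObject in
  constructor
  · intro hiso X hX
    -- the map `X ⟶ 0` is a weak equivalence, hence becomes invertible after `Q`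
    have hw : E.W (contractibleTriangle X).mor₂ :=
      ⟨_, _, _, rot_of_distTriang _ (contractible_distinguished X), E.shift X 1 hX⟩
    have : IsIso ((E.W.Q).map (contractibleTriangle X).mor₂) :=
      Localization.inverts E.W.Q E.W _ hw
    have h0 : IsZero (F.obj (0 : T)) := by
      rw [IsZero.iff_id_eq_zero, ← F.map_id, id_zero, F.map_zero]
    refine h0.of_iso ?_
    exact asIso (((E.W.Q).pointwiseLeftKanExtensionUnit F).app X) ≪≫
      (((E.W.Q).pointwiseLeftKanExtension F).mapIso
        (@asIso _ _ _ _ ((E.W.Q).map (contractibleTriangle X).mor₂) this)) ≪≫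
      (asIso (((E.W.Q).pointwiseLeftKanExtensionUnit F).app 0)).symm
  · intro h
    -- `F` inverts the weak equivalences
    have hinv : E.W.IsInvertedBy F := by
      rintro X Y f ⟨Z, g, h', hT, hZ⟩
      have h1 : IsZero (F.obj Z) := h Z hZ
      have h2 : IsZero (F.obj ((Triangle.mk f g h').invRotate.obj₁)) :=
        h _ (E.shift Z (-1) hZ)
      have e1 := F.map_distinguished_exact _ hT
      have e2 := F.map_distinguished_exact _ (inv_rot_of_distTriang _ hT)
      have hepi : Epi (F.map f) := e1.epi_f (h1.eq_of_tgt _ _)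
      have hmono : Mono (F.map f) := e2.mono_g (h2.eq_of_src _ _)
      exact isIso_of_mono_of_epi _
    -- lift `F` through the localization
    let G := Localization.lift F hinv E.W.Q
    let e : E.W.Q ⋙ G ≅ F := Localization.fac F hinv E.W.Q
    have : G.IsLeftKanExtension e.inv :=
      isLeftKanExtension_of_iso_unit E.W.Q E.W G e.inv
    -- the comparison map to the pointwise left Kan extension is an isomorphism
    have hφ : IsIso (G.descOfIsLeftKanExtension e.inv
        ((E.W.Q).pointwiseLeftKanExtension F)
        ((E.W.Q).pointwiseLeftKanExtensionUnit F)) := by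
      rw [← Functor.isLeftKanExtension_iff_isIso
        (G.descOfIsLeftKanExtension e.inv _ ((E.W.Q).pointwiseLeftKanExtensionUnit F))
        e.inv ((E.W.Q).pointwiseLeftKanExtensionUnit F)
        (G.descOfIsLeftKanExtension_fac e.inv _ _)]
      infer_instance
    -- conclude that the unit is an isomorphism, pointwise
    have : ∀ X : T, IsIso (((E.W.Q).pointwiseLeftKanExtensionUnit F).app X) := by
      intro X
      have hX := G.descOfIsLeftKanExtension_fac_app e.inv
        ((E.W.Q).pointwiseLeftKanExtension F)
        ((E.W.Q).pointwiseLeftKanExtensionUnit F) X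
      rw [← hX]
      infer_instance
    exact NatIso.isIso_of_isIso_app _
end

section
/- The right colocalisation of a homological functor is homological: for every homological functor F : T ⥤ Ab and every distinguished triangle B' → B → B'' → B'[1] in T, the sequence R⊥F(B') → R⊥F(B) → R⊥F(B'') is exact at R⊥F(B), where the maps are induced by postcomposition with the morphisms B' → B and B → B'' on the indexing categories Subo. -/
open CategoryTheory Category Limits Pretriangulated Triangulated

universe u

variable {T : Type u} [SmallCategory T] [HasZeroObject T] [Preadditive T]
  [HasShift T ℤ] [∀ n : ℤ, (shiftFunctor T n).Additive] [Pretriangulated T]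

variable (E : Triangulated.Subcategory T)

/-- `Subo(B)`: full subcategory of `Over B` on morphisms `s : X ⟶ B` with `X` in `E`. -/
abbrev SuboCat (B : T) := ObjectProperty.FullSubcategory (fun f : Over B => E.P f.left)

/-- The diagram `(s : X ⟶ B) ↦ F(X)` on `Subo(B)`. -/
def suboDiagram (F : T ⥤ Ab.{u}) (B : T) : SuboCat E B ⥤ Ab.{u} :=
  ObjectProperty.ι _ ⋙ Over.forget B ⋙ F

/-- The right colocalisation `R⊥F(B) := colim_{Subo(B)} F(X)`. -/
noncomputable abbrev coloc (F : T ⥤ Ab.{u}) (B : T) : Ab.{u} :=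
  colimit (suboDiagram E F B)
/-- The map `R⊥F(B) ⟶ R⊥F(B')` induced by `f : B ⟶ B'` via postcomposition. -/
noncomputable abbrev colocMap (F : T ⥤ Ab.{u}) {B B' : T} (f : B ⟶ B') :
    coloc E F B ⟶ coloc E F B' :=
  colimit.desc (suboDiagram E F B)
    { pt := coloc E F B'
      ι :=
        { app := fun X => colimit.ι (suboDiagram E F B') ⟨Over.mk (X.obj.hom ≫ f), X.property⟩
          naturality := by
            intro X Y g
            dsimp only [Functor.const_obj_obj, Functor.const_obj_map]
            refine Eq.trans ?_ (comp_id _).symm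
            exact colimit.w (suboDiagram E F B')
              (show (⟨Over.mk (X.obj.hom ≫ f), X.property⟩ : SuboCat E B') ⟶
                  ⟨Over.mk (Y.obj.hom ≫ f), Y.property⟩ from
                ObjectProperty.homMk (Over.homMk g.hom.left (by dsimp; rw [← assoc, Over.w g.hom]))) } }

@[simp]
lemma ι_colocMap (F : T ⥤ Ab.{u}) {B B' : T} (f : B ⟶ B') (X : SuboCat E B) :
    colimit.ι (suboDiagram E F B) X ≫ colocMap E F f =
      colimit.ι (suboDiagram E F B') ⟨Over.mk (X.obj.hom ≫ f), X.property⟩ :=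
  colimit.ι_desc _ _

lemma coloc_ι_eq (F : T ⥤ Ab.{u}) {B : T} {A : T} {f g : A ⟶ B} (hA : E.P A) (hfg : f = g) :
    colimit.ι (suboDiagram E F B) ⟨Over.mk f, hA⟩ =
      colimit.ι (suboDiagram E F B) ⟨Over.mk g, hA⟩ := by
  subst hfg; rfl

namespace CategoryTheory.Triangulated.Subcategory

variable {C : Type*} [Category C] [HasZeroObject C] [HasShift C ℤ]
    [Preadditive C] [∀ n : ℤ, (shiftFunctor C n).Additive] [Pretriangulated C]
    (S : Subcategory C) [ObjectProperty.IsClosedUnderIsomorphisms S.P]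

open ZeroObject in
lemma zero : S.P 0 := by
  obtain ⟨Z, hZ, hP⟩ := S.zero'
  exact ObjectProperty.prop_of_iso _ hZ.isoZero hP

lemma ext₂ (T : Triangle C) (hT : T ∈ distTriang C) (h₁ : S.P T.obj₁) (h₃ : S.P T.obj₃) :
    S.P T.obj₂ := by
  obtain ⟨Y, hY, ⟨e⟩⟩ := S.ext₂' T hT h₁ h₃
  exact ObjectProperty.prop_of_iso _ e.symm hY

lemma ext₁ (T : Triangle C) (hT : T ∈ distTriang C) (h₂ : S.P T.obj₂) (h₃ : S.P T.obj₃) :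
    S.P T.obj₁ :=
  S.ext₂ _ (inv_rot_of_distTriang _ hT) (S.shift _ (-1) h₃) h₂

lemma ext₃ (T : Triangle C) (hT : T ∈ distTriang C) (h₁ : S.P T.obj₁) (h₂ : S.P T.obj₂) :
    S.P T.obj₃ :=
  S.ext₂ _ (rot_of_distTriang _ hT) h₂ (S.shift _ 1 h₁)

end CategoryTheory.Triangulated.Subcategory


open ZeroObject in
instance suboNonempty (B : T) [ObjectProperty.IsClosedUnderIsomorphisms E.P] : Nonempty (SuboCat E B) :=
  ⟨⟨Over.mk (0 : (0 : T) ⟶ B), E.zero⟩⟩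

instance suboFilteredOrEmpty (B : T) [ObjectProperty.IsClosedUnderIsomorphisms E.P] :
    IsFilteredOrEmpty (SuboCat E B) where
  cocone_objs X Y :=
    ⟨⟨Over.mk (biprod.desc X.obj.hom Y.obj.hom),
      E.ext₂ _ (binaryBiproductTriangle_distinguished X.obj.left Y.obj.left)
        X.property Y.property⟩,
      ObjectProperty.homMk (Over.homMk biprod.inl (by simp)), ObjectProperty.homMk (Over.homMk biprod.inr (by simp)), trivial⟩
  cocone_maps X Y u v := by
    obtain ⟨Q, p, q, hQ⟩ := distinguished_cocone_triangle (u.hom.left - v.hom.left)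
    obtain ⟨t, ht⟩ := Triangle.yoneda_exact₂ _ hQ Y.obj.hom
      (by show (u.hom.left - v.hom.left) ≫ Y.obj.hom = 0; rw [Preadditive.sub_comp, Over.w u.hom, Over.w v.hom, sub_self])
    refine ⟨⟨Over.mk t, E.ext₃ _ hQ X.property Y.property⟩,
      ObjectProperty.homMk (Over.homMk p (by exact ht.symm)), ?_⟩
    have h0 : (u.hom.left - v.hom.left) ≫ p = 0 := comp_distTriang_mor_zero₁₂ _ hQ
    rw [Preadditive.sub_comp, sub_eq_zero] at h0
    apply ObjectProperty.hom_ext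
    apply Over.OverMorphism.ext
    exact h0

instance suboFiltered (B : T) [ObjectProperty.IsClosedUnderIsomorphisms E.P] : IsFiltered (SuboCat E B) := ⟨⟩

lemma ι_colocMap_apply (F : T ⥤ Ab.{u}) {B B' : T} (f : B ⟶ B') (X : SuboCat E B)
    (a : (suboDiagram E F B).obj X) :
    colocMap E F f (colimit.ι (suboDiagram E F B) X a) =
      colimit.ι (suboDiagram E F B') ⟨Over.mk (X.obj.hom ≫ f), X.property⟩ a := by
  rw [← CategoryTheory.comp_apply, ι_colocMap]
  rfl

lemma coloc_rep_eq_zero (F : T ⥤ Ab.{u}) [ObjectProperty.IsClosedUnderIsomorphisms E.P] {B : T}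
    (j : SuboCat E B) (x : (suboDiagram E F B).obj j)
    (hx : colimit.ι (suboDiagram E F B) j x = 0) :
    ∃ (j' : SuboCat E B) (i : j ⟶ j'), (suboDiagram E F B).map i x = 0 := by
  have h0 : colimit.ι (suboDiagram E F B) j x = colimit.ι (suboDiagram E F B) j 0 := by
    rw [hx, map_zero]
  rw [Concrete.colimit_rep_eq_iff_exists] at h0
  obtain ⟨k, i1, i2, hk⟩ := h0
  exact ⟨k, i1, by rw [hk]; exact map_zero _⟩

lemma ι_zero_struct (F : T ⥤ Ab.{u}) [F.PreservesZeroMorphisms] {B A : T} (hA : E.P A) :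
    colimit.ι (suboDiagram E F B) ⟨Over.mk (0 : A ⟶ B), hA⟩ = 0 := by
  have hw := colimit.w (suboDiagram E F B)
    (show (⟨Over.mk (0 : A ⟶ B), hA⟩ : SuboCat E B) ⟶ ⟨Over.mk (0 : A ⟶ B), hA⟩ from
      ObjectProperty.homMk (Over.homMk 0 (by simp)))
  rw [← hw]
  have : (suboDiagram E F B).map
      (show (⟨Over.mk (0 : A ⟶ B), hA⟩ : SuboCat E B) ⟶ ⟨Over.mk (0 : A ⟶ B), hA⟩ from
        ObjectProperty.homMk (Over.homMk 0 (by simp))) = 0 := by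
    dsimp [suboDiagram]
    exact F.map_zero _ _
  rw [this, zero_comp]


/-- **The right colocalisation of a homological functor is homological.**
For every homological functor `F : T ⥤ Ab` on a small triangulated category `T`
with a thick subcategory `E`, and every distinguished triangle
`B' ⟶ B ⟶ B'' ⟶ B'⟦1⟧` in `T`, the sequence
`R⊥F(B') ⟶ R⊥F(B) ⟶ R⊥F(B'')` is exact at `R⊥F(B)`, the maps being induced by
postcomposition with `B' ⟶ B` and `B ⟶ B''` on the indexing categories. -/
theorem colocalisation_isHomological [IsTriangulated T] [ObjectProperty.IsClosedUnderIsomorphisms E.P]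
    (hthick : ∀ ⦃X Y : T⦄ (i : X ⟶ Y) (r : Y ⟶ X), i ≫ r = 𝟙 X → E.P Y → E.P X)
    (F : T ⥤ Ab.{u}) [F.IsHomological]
    {B' B B'' : T} (f : B' ⟶ B) (g : B ⟶ B'') (h : B'' ⟶ B'⟦(1:ℤ)⟧)
    (hT : Triangle.mk f g h ∈ distTriang T) :
    Function.Exact ⇑(colocMap E F f) ⇑(colocMap E F g) := by
  have hfg : f ≫ g = 0 := comp_distTriang_mor_zero₁₂ _ hT
  intro y
  constructor
  · intro hy
    obtain ⟨j, a, rfl⟩ := Concrete.colimit_exists_rep (suboDiagram E F B) y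
    rw [ι_colocMap_apply] at hy
    obtain ⟨j', i, hi⟩ := coloc_rep_eq_zero E F _ _ hy
    obtain ⟨Q, p, q, hQ⟩ := distinguished_cocone_triangle i.hom.left
    have hinv := inv_rot_of_distTriang _ hQ
    have hK : E.P ((Triangle.mk i.hom.left p q).invRotate.obj₁) :=
      E.ext₁ _ hinv j.property j'.property
    have hex := (F.map_distinguished_exact _ hinv)
    rw [ShortComplex.ab_exact_iff] at hex
    obtain ⟨a₁, ha₁⟩ := hex a (by exact hi)
    have hk : ((Triangle.mk i.hom.left p q).invRotate.mor₁ ≫ j.obj.hom) ≫ g = 0 := by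
      have h1 : i.hom.left ≫ j'.obj.hom = j.obj.hom ≫ g := Over.w i.hom
      have h2 : (Triangle.mk i.hom.left p q).invRotate.mor₁ ≫ i.hom.left = 0 :=
        comp_distTriang_mor_zero₁₂ _ hinv
      have h3 : ((Triangle.mk i.hom.left p q).invRotate.mor₁ ≫ j.obj.hom) ≫ g =
          ((Triangle.mk i.hom.left p q).invRotate.mor₁ ≫ i.hom.left) ≫ j'.obj.hom := by
        exact (assoc _ _ _).trans ((congrArg (fun k => _ ≫ k) h1.symm).trans (assoc _ _ _).symm)
      rw [h3, h2, zero_comp]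
    obtain ⟨u, hu⟩ := Triangle.coyoneda_exact₂ _ hT
      ((Triangle.mk i.hom.left p q).invRotate.mor₁ ≫ j.obj.hom) hk
    refine ⟨colimit.ι (suboDiagram E F B') ⟨Over.mk u, hK⟩ a₁, ?_⟩
    erw [ι_colocMap_apply]
    erw [coloc_ι_eq E F hK (show (Over.mk u).hom ≫ f =
      (Triangle.mk i.hom.left p q).invRotate.mor₁ ≫ j.obj.hom by exact hu.symm)]
    have hw := colimit.w (suboDiagram E F B)
      (show (⟨Over.mk ((Triangle.mk i.hom.left p q).invRotate.mor₁ ≫ j.obj.hom), hK⟩ :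
          SuboCat E B) ⟶ j
        from ObjectProperty.homMk (Over.homMk ((Triangle.mk i.hom.left p q).invRotate.mor₁) (by exact rfl)))
    refine ((ConcreteCategory.congr_hom hw a₁).symm).trans ?_
    exact congrArg (colimit.ι (suboDiagram E F B) j) ha₁
  · rintro ⟨x, rfl⟩
    obtain ⟨j, a, rfl⟩ := Concrete.colimit_exists_rep (suboDiagram E F B') x
    erw [ι_colocMap_apply, ι_colocMap_apply]
    rw [coloc_ι_eq E F j.property
      (show (Over.mk (j.obj.hom ≫ f)).hom ≫ g = (0 : j.obj.left ⟶ B'') by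
        show (j.obj.hom ≫ f) ≫ g = 0; rw [assoc, hfg, comp_zero])]
    rw [ι_zero_struct]
    rfl
end
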